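/- Let A_min = (Q, Σ, δ, s, F) be a minimal DFA for a regular language L and assume width^D(L) = ent(A_min). If there exist a nonempty string γ and p pairwise distinct states u₁, …, u_p ∈ Q with δ(u_i, γ) = u_i for all i and with pairwise-intersecting open co-lex intervals ((inf I_{u_i}, sup I_{u_i}) ∩ (inf I_{u_j}, sup I_{u_j}) ≠ ∅ for all i, j), then width^D(L) ≥ p. -/

import Mathlib

/-- Co-lexicographic order on finite strings: lexicographic order on reverses. -/
def StrColex {Sig : Type*} [LinearOrder Sig] (a b : List Sig) : Prop :=
  List.Lex (· < ·) a.reverse b.reverse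

/-- Reflexive co-lexicographic order. -/
def ColexLe {Sig : Type*} [LinearOrder Sig] (a b : List Sig) : Prop :=
  a = b ∨ StrColex a b

/-- A finite or left-infinite string, represented by its sequence of characters read
from the right end (`none` signals that the string is exhausted). -/
def CStr (Sig : Type*) := ℕ → Option Sig

/-- The representation of a finite string as a `CStr`. -/
def toCStr {Sig : Type*} (a : List Sig) : CStr Sig := fun i => a.reverse[i]?

/-- The left-infinite string `γ^ω = ⋯γγγ` (for nonempty `γ`) as a `CStr`. -/
def omegaCStr {Sig : Type*} (γ : List Sig) : CStr Sig :=
  fun i => γ.reverse[i % γ.length]?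

/-- Strict co-lexicographic order on finite or left-infinite strings: reading from the
right, at the first position where the two strings differ, either the first string is
exhausted or its character is smaller. -/
def cstrLt {Sig : Type*} [LinearOrder Sig] (s t : CStr Sig) : Prop :=
  ∃ j, (∀ i, i < j → s i = t i) ∧
    ((s j = none ∧ t j ≠ none) ∨ ∃ a b, s j = some a ∧ t j = some b ∧ a < b)

/-- Non-strict co-lexicographic order on finite or left-infinite strings. -/
def cstrLe {Sig : Type*} [LinearOrder Sig] (s t : CStr Sig) : Prop :=
  s = t ∨ cstrLt s t

/-- `w` is a co-lexicographic lower bound of the set `A` of finite strings. -/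
def IsColexLB {Sig : Type*} [LinearOrder Sig] (w : CStr Sig) (A : Set (List Sig)) : Prop :=
  ∀ a ∈ A, cstrLe w (toCStr a)

/-- `w` is a co-lexicographic upper bound of the set `A` of finite strings. -/
def IsColexUB {Sig : Type*} [LinearOrder Sig] (w : CStr Sig) (A : Set (List Sig)) : Prop :=
  ∀ a ∈ A, cstrLe (toCStr a) w

/-- `w` is the co-lexicographic infimum of the set `A` of finite strings. -/
def IsColexInf {Sig : Type*} [LinearOrder Sig] (w : CStr Sig) (A : Set (List Sig)) : Prop :=
  IsColexLB w A ∧ ∀ w', IsColexLB w' A → cstrLe w' w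

/-- `w` is the co-lexicographic supremum of the set `A` of finite strings. -/
def IsColexSup {Sig : Type*} [LinearOrder Sig] (w : CStr Sig) (A : Set (List Sig)) : Prop :=
  IsColexUB w A ∧ ∀ w', IsColexUB w' A → cstrLe w w'

/-- The extension of a (total) DFA transition function to strings. -/
def deltaStar {Q Sig : Type*} (δ : Q → Sig → Q) (q : Q) (a : List Sig) : Q :=
  a.foldl δ q

/-- `Ireach δ s u` is the set `I_u` of strings leading from the source `s` to `u`. -/
def Ireach {Q Sig : Type*} (δ : Q → Sig → Q) (s u : Q) : Set (List Sig) :=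
  {a | deltaStar δ s a = u}

/-- Membership of a finite string in the open co-lex interval `(lo, hi)`. -/
def inOpenInterval {Sig : Type*} [LinearOrder Sig] (lo hi : CStr Sig) (a : List Sig) : Prop :=
  cstrLt lo (toCStr a) ∧ cstrLt (toCStr a) hi

/-- A set `S` of states is entangled: there is a co-lexicographically monotone sequence
of strings hitting every state of `S` infinitely often. -/
def Entangled {Q Sig : Type*} [LinearOrder Sig] (δ : Q → Sig → Q) (s : Q) (S : Set Q) : Prop :=
  ∃ a : ℕ → List Sig,
    ((∀ t t', t ≤ t' → ColexLe (a t) (a t')) ∨ (∀ t t', t ≤ t' → ColexLe (a t') (a t))) ∧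
    ∀ u ∈ S, ∀ t, ∃ t', t ≤ t' ∧ deltaStar δ s (a t') = u



set_option linter.unusedSectionVars false
section helpers
variable {Sig : Type*} [LinearOrder Sig]

lemma cstrLt_irrefl (s : CStr Sig) : ¬ cstrLt s s := by
  rintro ⟨j, _, h⟩
  rcases h with ⟨h1, h2⟩ | ⟨a, b, ha, hb, hab⟩
  · exact h2 h1
  · rw [ha] at hb; exact lt_irrefl _ (Option.some.inj hb ▸ hab)

lemma cstrLt_trans {s t w : CStr Sig} (h1 : cstrLt s t) (h2 : cstrLt t w) : cstrLt s w := by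
  obtain ⟨j1, e1, d1⟩ := h1
  obtain ⟨j2, e2, d2⟩ := h2
  refine ⟨min j1 j2, fun i hi =>
    (e1 i (lt_of_lt_of_le hi (min_le_left _ _))).trans
      (e2 i (lt_of_lt_of_le hi (min_le_right _ _))), ?_⟩
  rcases lt_trichotomy j1 j2 with h | h | h
  · rw [min_eq_left h.le]
    have ht : t j1 = w j1 := e2 j1 h
    rcases d1 with ⟨hs, htn⟩ | ⟨a, b, ha, hb, hab⟩
    · exact Or.inl ⟨hs, ht ▸ htn⟩
    · exact Or.inr ⟨a, b, ha, ht ▸ hb, hab⟩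
  · subst h; rw [min_self]
    rcases d1 with ⟨hs, htn⟩ | ⟨a, b, ha, hb, hab⟩
    · rcases d2 with ⟨ht', _⟩ | ⟨c, d, hc, hd, _⟩
      · exact absurd ht' htn
      · exact Or.inl ⟨hs, by rw [hd]; simp⟩
    · rcases d2 with ⟨ht', _⟩ | ⟨c, d, hc, hd, hcd⟩
      · rw [hb] at ht'; cases ht'
      · rw [hb] at hc
        exact Or.inr ⟨a, d, ha, hd, hab.trans (Option.some.inj hc ▸ hcd)⟩
  · rw [min_eq_right h.le]
    have hst : s j2 = t j2 := e1 j2 h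
    rcases d2 with ⟨ht, hw⟩ | ⟨a, b, ha, hb, hab⟩
    · exact Or.inl ⟨hst.trans ht, hw⟩
    · exact Or.inr ⟨a, b, hst.trans ha, hb, hab⟩

lemma cstrLt_total (s t : CStr Sig) : s = t ∨ cstrLt s t ∨ cstrLt t s := by
  classical
  by_cases h : ∀ i, s i = t i
  · exact Or.inl (funext h)
  · push_neg at h
    right
    have hj : s (Nat.find h) ≠ t (Nat.find h) := Nat.find_spec h
    have hlt : ∀ i, i < Nat.find h → s i = t i :=
      fun i hi => not_not.1 (Nat.find_min h hi)
    rcases hs : s (Nat.find h) with _ | a <;> rcases ht : t (Nat.find h) with _ | b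
    · exact absurd (hs.trans ht.symm) hj
    · exact Or.inl ⟨_, hlt, Or.inl ⟨hs, by rw [ht]; simp⟩⟩
    · exact Or.inr ⟨_, fun i hi => (hlt i hi).symm, Or.inl ⟨ht, by rw [hs]; simp⟩⟩
    · rcases lt_trichotomy a b with hab | hab | hab
      · exact Or.inl ⟨_, hlt, Or.inr ⟨a, b, hs, ht, hab⟩⟩
      · exact absurd (by rw [hs, ht, hab]) hj
      · exact Or.inr ⟨_, fun i hi => (hlt i hi).symm, Or.inr ⟨b, a, ht, hs, hab⟩⟩

lemma cstrLt_asymm {s t : CStr Sig} (h : cstrLt s t) : ¬ cstrLe t s := by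
  rintro (rfl | h')
  · exact cstrLt_irrefl _ h
  · exact cstrLt_irrefl _ (cstrLt_trans h h')

lemma cstrLe_trans {s t w : CStr Sig} (h1 : cstrLe s t) (h2 : cstrLe t w) : cstrLe s w := by
  rcases h1 with rfl | h1
  · exact h2
  · rcases h2 with rfl | h2
    · exact Or.inr h1
    · exact Or.inr (cstrLt_trans h1 h2)

lemma cstrLe_lt {s t w : CStr Sig} (h1 : cstrLe s t) (h2 : cstrLt t w) : cstrLt s w := by
  rcases h1 with rfl | h1
  · exact h2
  · exact cstrLt_trans h1 h2

lemma cstrLt_le {s t w : CStr Sig} (h1 : cstrLt s t) (h2 : cstrLe t w) : cstrLt s w := by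
  rcases h2 with rfl | h2
  · exact h1
  · exact cstrLt_trans h1 h2

lemma cstrLt_of_not_le {s t : CStr Sig} (h : ¬ cstrLe t s) : cstrLt s t := by
  rcases cstrLt_total s t with rfl | h' | h'
  · exact absurd (Or.inl rfl) h
  · exact h'
  · exact absurd (Or.inr h') h


/-- powers of a word -/
def npowL (γ : List Sig) : ℕ → List Sig
  | 0 => []
  | m + 1 => npowL γ m ++ γ

lemma npowL_add (γ : List Sig) (x y : ℕ) : npowL γ (x + y) = npowL γ x ++ npowL γ y := by
  induction y with
  | zero => simp [npowL]
  | succ y ih => rw [← Nat.add_assoc]; simp [npowL, ih, List.append_assoc]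

lemma npowL_length (γ : List Sig) (m : ℕ) : (npowL γ m).length = m * γ.length := by
  induction m with
  | zero => simp [npowL]
  | succ m ih => simp [npowL, ih, Nat.succ_mul]

lemma toCStr_append (a c : List Sig) (i : ℕ) :
    toCStr (a ++ c) i = if i < c.length then toCStr c i else toCStr a (i - c.length) := by
  simp only [toCStr, List.reverse_append]
  split
  · rw [List.getElem?_append_left (by simpa using ‹i < c.length›)]
  · rw [List.getElem?_append_right (by simpa using Nat.le_of_not_lt ‹¬ i < c.length›)]
    simp

lemma toCStr_none_of_le {a : List Sig} {i : ℕ} (h : a.length ≤ i) : toCStr a i = none := by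
  show a.reverse[i]? = none
  exact List.getElem?_eq_none (by simpa using h)

lemma toCStr_length (a : List Sig) : toCStr a a.length = none :=
  toCStr_none_of_le le_rfl

lemma toCStr_lt_length {a : List Sig} {i : ℕ} (h : i < a.length) : toCStr a i ≠ none := by
  show a.reverse[i]? ≠ none
  rw [Ne, List.getElem?_eq_none_iff]
  simp
  omega

lemma omegaCStr_ne_none {γ : List Sig} (hγ : γ ≠ []) (i : ℕ) : omegaCStr γ i ≠ none := by
  have hlen : 0 < γ.length := List.length_pos_iff.2 hγ
  simp [omegaCStr]
  exact Nat.mod_lt _ hlen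

/-- appending a common suffix preserves strict colex order -/
lemma cstrLt_append_right {a b : List Sig} (c : List Sig)
    (h : cstrLt (toCStr a) (toCStr b)) :
    cstrLt (toCStr (a ++ c)) (toCStr (b ++ c)) := by
  obtain ⟨j, agree, d⟩ := h
  refine ⟨j + c.length, fun i hi => ?_, ?_⟩
  · rw [toCStr_append, toCStr_append]
    split
    · rfl
    · exact agree _ (by omega)
  · rw [toCStr_append, toCStr_append, if_neg (by omega), if_neg (by omega),
      Nat.add_sub_cancel]
    exact d

/-- positions inside the `γ^m` suffix agree with `γ^ω` -/
lemma toCStr_append_npow (γ w : List Sig) (m i : ℕ) (hi : i < m * γ.length) :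
    toCStr (w ++ npowL γ m) i = omegaCStr γ i := by
  induction m generalizing i w with
  | zero => omega
  | succ m ih =>
    rw [show w ++ npowL γ (m+1) = (w ++ npowL γ m) ++ γ by
      simp [npowL, List.append_assoc]]
    rw [toCStr_append]
    split
    · simp only [omegaCStr, toCStr, Nat.mod_eq_of_lt ‹i < γ.length›]
    · have hile : γ.length ≤ i := Nat.le_of_not_lt ‹¬ _›
      have h2 : (m + 1) * γ.length = m * γ.length + γ.length := by ring
      rw [ih w (i - γ.length) (by omega)]
      simp only [omegaCStr]
      congr 1
      conv_rhs => rw [Nat.mod_eq_sub_mod hile]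

/-- Key lemma: a finite string below `γ^ω` is below anything ending in a long `γ^m`. -/
lemma lt_omega_lt_pow {α : List Sig} {γ : List Sig} (hγ : γ ≠ [])
    (h : cstrLt (toCStr α) (omegaCStr γ)) (w : List Sig) (m : ℕ)
    (hm : α.length < m * γ.length) :
    cstrLt (toCStr α) (toCStr (w ++ npowL γ m)) := by
  obtain ⟨j, agree, d⟩ := h
  have hj : j ≤ α.length := by
    by_contra hj
    exact omegaCStr_ne_none hγ α.length ((agree α.length (by omega)) ▸ toCStr_length α)
  refine ⟨j, ?_, ?_⟩
  · intro i hi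
    exact (agree i hi).trans (toCStr_append_npow γ w m i (by omega)).symm
  · rw [toCStr_append_npow γ w m j (by omega)]
    exact d

/-- Dual key lemma. -/
lemma omega_lt_lt_pow {α : List Sig} {γ : List Sig} (hγ : γ ≠ [])
    (h : cstrLt (omegaCStr γ) (toCStr α)) (w : List Sig) (m : ℕ)
    (hm : α.length < m * γ.length) :
    cstrLt (toCStr (w ++ npowL γ m)) (toCStr α) := by
  obtain ⟨j, agree, d⟩ := h
  have hj : j < α.length := by
    rcases d with ⟨hn, _⟩ | ⟨a, b, _, hb, _⟩
    · exact absurd hn (omegaCStr_ne_none hγ j)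
    · by_contra hjl
      rw [toCStr_none_of_le (by omega)] at hb
      cases hb
  refine ⟨j, ?_, ?_⟩
  · intro i hi
    exact (toCStr_append_npow γ w m i (by omega)).trans (agree i hi)
  · rw [toCStr_append_npow γ w m j (by omega)]
    exact d

/-- converting cstrLt on finite strings to Colex -/
lemma lex_of_first_diff : ∀ (l r : List Sig) (j : ℕ),
    (∀ i, i < j → l[i]? = r[i]?) →
    ((l[j]? = none ∧ r[j]? ≠ none) ∨
      ∃ a b, l[j]? = some a ∧ r[j]? = some b ∧ a < b) →
    List.Lex (· < ·) l r := by
  intro l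
  induction l with
  | nil =>
    intro r j _ d
    cases r with
    | nil => simp at d
    | cons x r' => exact List.Lex.nil
  | cons x l' ih =>
    intro r j agree d
    cases r with
    | nil => simp at d
    | cons y r' =>
      cases j with
      | zero =>
        rcases d with ⟨h, _⟩ | ⟨a, b, ha, hb, hab⟩
        · exact absurd h (by simp)
        · simp at ha hb
          exact List.Lex.rel (ha ▸ hb ▸ hab)
      | succ j' =>
        have h0 := agree 0 (Nat.succ_pos _)
        simp at h0
        subst h0
        exact List.Lex.cons (ih r' j' (fun i hi => agree (i+1) (by omega)) d)

lemma colex_of_cstrLt {a b : List Sig} (h : cstrLt (toCStr a) (toCStr b)) : StrColex a b := by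
  obtain ⟨j, agree, d⟩ := h
  exact lex_of_first_diff a.reverse b.reverse j agree d

lemma deltaStar_append {Q : Type*} (δ : Q → Sig → Q) (q : Q) (a b : List Sig) :
    deltaStar δ q (a ++ b) = deltaStar δ (deltaStar δ q a) b :=
  List.foldl_append

lemma deltaStar_npow {Q : Type*} (δ : Q → Sig → Q) {v : Q} {γ : List Sig}
    (hcyc : deltaStar δ v γ = v) (m : ℕ) : deltaStar δ v (npowL γ m) = v := by
  induction m with
  | zero => rfl
  | succ m ih => rw [npowL, deltaStar_append, ih, hcyc]

end helpers


section more
variable {Sig : Type*} [LinearOrder Sig]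

lemma exists_cstr_max : ∀ (l : List (CStr Sig)), l ≠ [] → ∃ x ∈ l, ∀ y ∈ l, cstrLe y x := by
  classical
  intro l
  induction l with
  | nil => simp
  | cons x l' ih =>
    intro _
    rcases eq_or_ne l' [] with rfl | hne
    · refine ⟨x, by simp, fun y hy => ?_⟩
      simp at hy
      exact Or.inl (by rw [hy])
    · obtain ⟨m, hm, hmax⟩ := ih hne
      by_cases hxm : cstrLe x m
      · refine ⟨m, by simp [hm], fun y hy => ?_⟩
        rcases List.mem_cons.1 hy with rfl | hy
        · exact hxm
        · exact hmax y hy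
      · refine ⟨x, by simp, fun y hy => ?_⟩
        rcases List.mem_cons.1 hy with rfl | hy
        · exact Or.inl rfl
        · exact cstrLe_trans (hmax y hy) (Or.inr (cstrLt_of_not_le hxm))

lemma exists_cstr_min : ∀ (l : List (CStr Sig)), l ≠ [] → ∃ x ∈ l, ∀ y ∈ l, cstrLe x y := by
  classical
  intro l
  induction l with
  | nil => simp
  | cons x l' ih =>
    intro _
    rcases eq_or_ne l' [] with rfl | hne
    · refine ⟨x, by simp, fun y hy => ?_⟩
      simp at hy
      exact Or.inl (by rw [hy])
    · obtain ⟨m, hm, hmin⟩ := ih hne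
      by_cases hxm : cstrLe m x
      · refine ⟨m, by simp [hm], fun y hy => ?_⟩
        rcases List.mem_cons.1 hy with rfl | hy
        · exact hxm
        · exact hmin y hy
      · refine ⟨x, by simp, fun y hy => ?_⟩
        rcases List.mem_cons.1 hy with rfl | hy
        · exact Or.inl rfl
        · exact cstrLe_trans (Or.inr (cstrLt_of_not_le hxm)) (hmin y hy)

/-- The core construction: given representatives all on the same side of `γ^ω`,
the image of `u` is entangled. -/
lemma entangled_construction {Q : Type*} [DecidableEq Q] (δ : Q → Sig → Q) (s : Q)
    {p : ℕ} (hp : 0 < p) (u : Fin p → Q)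
    (γ : List Sig) (hγ : γ ≠ [])
    (hcyc : ∀ i, deltaStar δ (u i) γ = u i)
    (α : Fin p → List Sig) (hmem : ∀ k, deltaStar δ s (α k) = u k)
    (hside : (∀ k, cstrLt (toCStr (α k)) (omegaCStr γ)) ∨
      (∀ k, cstrLt (omegaCStr γ) (toCStr (α k)))) :
    Entangled δ s (↑(Finset.univ.image u)) := by
  classical
  have hγpos : 0 < γ.length := List.length_pos_iff.2 hγ
  set M : ℕ := Finset.univ.sup (fun k : Fin p => (α k).length) with hM
  set m : ℕ := M + 1 with hmdef
  have hm : ∀ k, (α k).length < m * γ.length := by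
    intro k
    have h1 : (α k).length ≤ M := Finset.le_sup (f := fun k : Fin p => (α k).length) (Finset.mem_univ k)
    have h2 : m ≤ m * γ.length := Nat.le_mul_of_pos_right m hγpos
    omega
  set idx : ℕ → Fin p := fun t => ⟨t % p, Nat.mod_lt t hp⟩ with hidx
  set a : ℕ → List Sig := fun t => α (idx t) ++ npowL γ (m * t) with ha
  have hreach : ∀ t, deltaStar δ s (a t) = u (idx t) := by
    intro t
    rw [ha]
    simp only
    rw [deltaStar_append, hmem, deltaStar_npow δ (hcyc _)]
  have hhit : ∀ v ∈ (↑(Finset.univ.image u) : Set Q), ∀ t, ∃ t', t ≤ t' ∧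
      deltaStar δ s (a t') = v := by
    intro v hv t
    simp only [Finset.coe_image, Finset.coe_univ, Set.image_univ, Set.mem_range] at hv
    obtain ⟨i, rfl⟩ := hv
    refine ⟨p * t + i.val, by nlinarith [i.val.zero_le, hp], ?_⟩
    rw [hreach]
    congr 1
    apply Fin.ext
    simp only [hidx]
    rw [Nat.mul_add_mod, Nat.mod_eq_of_lt i.isLt]
  have hshape : ∀ t, a (t + 1) = (α (idx (t+1)) ++ npowL γ m) ++ npowL γ (m * t) := by
    intro t
    rw [ha]
    simp only
    rw [show m * (t + 1) = m + m * t by ring, npowL_add, List.append_assoc]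
  rcases hside with hside | hside
  · have hstep : ∀ t, cstrLt (toCStr (a t)) (toCStr (a (t + 1))) := by
      intro t
      rw [hshape]
      exact cstrLt_append_right _
        (lt_omega_lt_pow hγ (hside (idx t)) (α (idx (t+1))) m (hm _))
    have hchain : ∀ t t', t < t' → cstrLt (toCStr (a t)) (toCStr (a t')) := by
      intro t t' h
      induction t' with
      | zero => omega
      | succ t'' ih =>
        rcases Nat.lt_succ_iff_lt_or_eq.1 h with h' | rfl
        · exact cstrLt_trans (ih h') (hstep t'')
        · exact hstep t
    refine ⟨a, Or.inl fun t t' htt => ?_, fun v hv t => hhit v hv t⟩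
    rcases eq_or_lt_of_le htt with rfl | hlt
    · exact Or.inl rfl
    · exact Or.inr (colex_of_cstrLt (hchain t t' hlt))
  · have hstep : ∀ t, cstrLt (toCStr (a (t + 1))) (toCStr (a t)) := by
      intro t
      rw [hshape]
      exact cstrLt_append_right _
        (omega_lt_lt_pow hγ (hside (idx t)) (α (idx (t+1))) m (hm _))
    have hchain : ∀ t t', t < t' → cstrLt (toCStr (a t')) (toCStr (a t)) := by
      intro t t' h
      induction t' with
      | zero => omega
      | succ t'' ih =>
        rcases Nat.lt_succ_iff_lt_or_eq.1 h with h' | rfl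
        · exact cstrLt_trans (hstep t'') (ih h')
        · exact hstep t
    refine ⟨a, Or.inr fun t t' htt => ?_, fun v hv t => hhit v hv t⟩
    rcases eq_or_lt_of_le htt with rfl | hlt
    · exact Or.inl rfl
    · exact Or.inr (colex_of_cstrLt (hchain t t' hlt))

end more


/-- If the minimal DFA of `L` (with all states reachable) contains `p` pairwise
distinct states each carrying a cycle labeled by the same nonempty string `γ`, whose
open co-lex intervals pairwise intersect, and `width^D(L) = ent(A_min)` where `ent`
is the greatest cardinality of an entangled set, then `width^D(L) ≥ p`. -/
theorem stmt_14 {Q Sig : Type*} [Fintype Q] [LinearOrder Sig]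
    (δ : Q → Sig → Q) (s : Q) (widthD ent : ℕ)
    (hacc : ∀ u : Q, ∃ a, deltaStar δ s a = u)
    (hent : IsGreatest {k | ∃ S : Finset Q, S.card = k ∧ Entangled δ s ↑S} ent)
    (hwd : widthD = ent)
    (p : ℕ) (γ : List Sig) (hγ : γ ≠ [])
    (u : Fin p → Q) (hinj : Function.Injective u)
    (hcyc : ∀ i, deltaStar δ (u i) γ = u i)
    (infI supI : Fin p → CStr Sig)
    (hinf : ∀ i, IsColexInf (infI i) (Ireach δ s (u i)))
    (hsup : ∀ i, IsColexSup (supI i) (Ireach δ s (u i)))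
    (hint : ∀ i j, ∃ α : List Sig,
      inOpenInterval (infI i) (supI i) α ∧ inOpenInterval (infI j) (supI j) α) :
    p ≤ widthD := by
  subst hwd
  rcases Nat.eq_zero_or_pos p with rfl | hp
  · exact Nat.zero_le _
  classical
  -- find a string b strictly inside every interval
  obtain ⟨imax, hmax⟩ : ∃ i0 : Fin p, ∀ k, cstrLe (infI k) (infI i0) := by
    obtain ⟨x, hxmem, hx⟩ := exists_cstr_max (List.ofFn infI)
      (by simp [← List.length_pos_iff]; omega)
    obtain ⟨i0, hi0⟩ := List.mem_ofFn.1 hxmem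
    exact ⟨i0, fun k => hi0 ▸ hx _ (List.mem_ofFn.2 ⟨k, rfl⟩)⟩
  obtain ⟨jmin, hmin⟩ : ∃ j0 : Fin p, ∀ k, cstrLe (supI j0) (supI k) := by
    obtain ⟨x, hxmem, hx⟩ := exists_cstr_min (List.ofFn supI)
      (by simp [← List.length_pos_iff]; omega)
    obtain ⟨j0, hj0⟩ := List.mem_ofFn.1 hxmem
    exact ⟨j0, fun k => hj0 ▸ hx _ (List.mem_ofFn.2 ⟨k, rfl⟩)⟩
  obtain ⟨b, hb1, hb2⟩ := hint imax jmin
  have hbinf : ∀ k, cstrLt (infI k) (toCStr b) := fun k => cstrLe_lt (hmax k) hb1.1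
  have hbsup : ∀ k, cstrLt (toCStr b) (supI k) := fun k => cstrLt_le hb2.2 (hmin k)
  -- each I_{u k} has elements on both sides of b
  have hlow : ∀ k, ∃ β, β ∈ Ireach δ s (u k) ∧ cstrLt (toCStr β) (toCStr b) := by
    intro k
    by_contra h
    push_neg at h
    have hlb : IsColexLB (toCStr b) (Ireach δ s (u k)) := by
      intro c hc
      rcases cstrLt_total (toCStr b) (toCStr c) with he | h' | h'
      · exact Or.inl he
      · exact Or.inr h'
      · exact absurd h' (h c hc)
    exact cstrLt_asymm (hbinf k) ((hinf k).2 _ hlb)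
  have hhigh : ∀ k, ∃ β, β ∈ Ireach δ s (u k) ∧ cstrLt (toCStr b) (toCStr β) := by
    intro k
    by_contra h
    push_neg at h
    have hub : IsColexUB (toCStr b) (Ireach δ s (u k)) := by
      intro c hc
      rcases cstrLt_total (toCStr c) (toCStr b) with he | h' | h'
      · exact Or.inl he
      · exact Or.inr h'
      · exact absurd h' (h c hc)
    exact cstrLt_asymm (hbsup k) ((hsup k).2 _ hub)
  -- compare b with the infinite string γ^ω, choose representatives accordingly
  have hentS : Entangled δ s (↑(Finset.univ.image u)) := by
    rcases cstrLt_total (toCStr b) (omegaCStr γ) with he | hc | hc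
    · exact absurd (he ▸ toCStr_length b) (omegaCStr_ne_none hγ b.length)
    · choose β hβmem hβlt using hlow
      exact entangled_construction δ s hp u γ hγ hcyc β (fun k => hβmem k)
        (Or.inl fun k => cstrLt_trans (hβlt k) hc)
    · choose β hβmem hβlt using hhigh
      exact entangled_construction δ s hp u γ hγ hcyc β (fun k => hβmem k)
        (Or.inr fun k => cstrLt_trans hc (hβlt k))
  refine hent.2 ⟨Finset.univ.image u, ?_, hentS⟩
  rw [Finset.card_image_of_injective _ hinj, Finset.card_univ, Fintype.card_fin]
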